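/- arXiv:2107.02272 — 2 statements merged into one kernel-verified Lean document; each statement's English description precedes it below -/
import Mathlib

section
/- Let R be a commutative ring, let I and J be finitely generated ideals of R, and let M be an R-module. Then the I-power torsion submodule of the J-power torsion submodule of M equals the (I+J)-power torsion submodule of M; that is, Γ_I(Γ_J M) = Γ_{I+J} M as submodules of M. -/
/-- The `I`-power torsion submodule `Γ_I M = {m ∈ M : Iⁿ • m = 0 for some n ≥ 0}`
of an `R`-module `M`, for an ideal `I ⊆ R`. -/
def powerTorsion {R : Type*} [CommRing R] (I : Ideal R) (M : Type*) [AddCommGroup M]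
    [Module R M] : Submodule R M :=
  ⨆ n : ℕ, Submodule.torsionBySet R M ((I ^ n : Ideal R) : Set R)

lemma mem_powerTorsion_iff {R : Type*} [CommRing R] (I : Ideal R) {M : Type*} [AddCommGroup M]
    [Module R M] (x : M) :
    x ∈ powerTorsion I M ↔ ∃ n : ℕ, ∀ r ∈ I ^ n, r • x = 0 := by
  have hdir : Directed (· ≤ ·) fun n : ℕ =>
      Submodule.torsionBySet R M ((I ^ n : Ideal R) : Set R) := by
    intro a b
    refine ⟨max a b, ?_, ?_⟩ <;>
      exact Submodule.torsionBySet_le_torsionBySet_of_subset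
        (Ideal.pow_le_pow_right (by omega))
  rw [powerTorsion, Submodule.mem_iSup_of_directed _ hdir]
  simp only [Submodule.mem_torsionBySet_iff, Subtype.forall, SetLike.mem_coe]

/-- `Γ_I (Γ_J M) = Γ_{I+J} M` as submodules of `M`, for finitely generated ideals
`I, J` of a commutative ring `R` and any `R`-module `M`. -/
theorem powerTorsion_powerTorsion_eq {R : Type*} [CommRing R] (I J : Ideal R)
    (hI : I.FG) (hJ : J.FG) (M : Type*) [AddCommGroup M] [Module R M] :
    (powerTorsion I (powerTorsion J M)).map (powerTorsion J M).subtype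
      = powerTorsion (I + J) M := by
  ext x
  simp only [Submodule.mem_map, Submodule.subtype_apply]
  constructor
  · rintro ⟨⟨y, hyJ⟩, hyI, rfl⟩
    rw [mem_powerTorsion_iff] at hyI
    rw [mem_powerTorsion_iff] at hyJ
    obtain ⟨n, hn⟩ := hyI
    obtain ⟨m, hm⟩ := hyJ
    rw [mem_powerTorsion_iff]
    refine ⟨n + m, fun r hr => ?_⟩
    have : r ∈ I ^ n ⊔ J ^ m := Ideal.sup_pow_add_le_pow_sup_pow hr
    obtain ⟨a, ha, b, hb, rfl⟩ := Submodule.mem_sup.mp this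
    have h1 : a • (⟨y, _⟩ : powerTorsion J M) = 0 := hn a ha
    have h1' : a • y = 0 := congrArg Subtype.val h1
    rw [add_smul, h1', hm b hb, add_zero]
  · intro hx
    rw [mem_powerTorsion_iff] at hx
    obtain ⟨n, hn⟩ := hx
    have hxJ : x ∈ powerTorsion J M := by
      rw [mem_powerTorsion_iff]
      exact ⟨n, fun r hr => hn r (Ideal.pow_right_mono le_sup_right n hr)⟩
    refine ⟨⟨x, hxJ⟩, ?_, rfl⟩
    rw [mem_powerTorsion_iff]
    refine ⟨n, fun r hr => ?_⟩
    exact Subtype.ext (hn r (Ideal.pow_right_mono le_sup_left n hr))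
end

section
/- Let N be the ℤ₃[B]-module N = T ⊕ ℤ₃[B]^{⊕4} ⊕ P₁ ⊕ P₂, where T ≅ (ℤ/3)^{⊕8} with B acting as zero on T, and where for k = 1, 2 each P_k is the ℤ₃[B]-module with generators D_k, B_k and single defining relation B·D_k = 3·B_k. Then the B-power torsion submodule of N equals T, and the cokernel of the localization map N → N_B is isomorphic as a ℤ₃[B]-module to (ℤ₃[B, B⁻¹]/ℤ₃[B])^{⊕4} ⊕ Q^{⊕2}, where Q = ℤ₃[B, B⁻¹]/(ℤ₃[B] + ℤ₃·3·B⁻¹). -/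
set_option synthInstance.maxHeartbeats 400000

noncomputable section

/-- `ℤ₃[B]`, the polynomial ring over the 3-adic integers with `B = X`. -/
abbrev S3 : Type _ := Polynomial ℤ_[3]

/-- `ℤ/3` as a `ℤ₃[B]`-module, with `B` acting as zero and `ℤ₃` acting via reduction. -/
instance : Module S3 (ZMod 3) :=
  Module.compHom _ ((PadicInt.toZMod (p := 3)).comp (Polynomial.evalRingHom (0 : ℤ_[3])))

/-- The `ℤ₃[B]`-module `P_k = ℤ₃[B]{D_k, B_k}/(B·D_k = 3·B_k)`. -/
abbrev P3 : Type _ :=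
  (S3 × S3) ⧸ Submodule.span S3 {((Polynomial.X : S3), -(Polynomial.C (3 : ℤ_[3])))}

/-- The basic block `N = T ⊕ ℤ₃[B]⁴ ⊕ P₁ ⊕ P₂` of `π_*(tmf)` at `p = 3`, where
`T ≅ (ℤ/3)⁸` with `B` acting as zero. -/
abbrev N3 : Type _ := (Fin 8 → ZMod 3) × (Fin 4 → S3) × (P3 × P3)

/-- The `B`-power torsion submodule `Γ_B N = {m : Bⁿ • m = 0 for some n}`. -/
def gammaB : Submodule S3 N3 :=
  ⨆ n : ℕ, Submodule.torsionBy S3 N3 ((Polynomial.X : S3) ^ n)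

/-- The localization map `N → N_B`. -/
abbrev locMapN : N3 →ₗ[S3] LocalizedModule (Submonoid.powers (Polynomial.X : S3)) N3 :=
  LocalizedModule.mkLinearMap (Submonoid.powers (Polynomial.X : S3)) N3

/-- The cokernel `N/B^∞` of `N → N_B`. -/
abbrev N3Cok : Type _ :=
  LocalizedModule (Submonoid.powers (Polynomial.X : S3)) N3 ⧸ LinearMap.range locMapN

/-- `ℤ₃[B,B⁻¹]/ℤ₃[B]`. -/
abbrev LPQ3 : Type _ :=
  LaurentPolynomial ℤ_[3] ⧸
    LinearMap.range (Algebra.linearMap S3 (LaurentPolynomial ℤ_[3]))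

/-- `Q = ℤ₃[B,B⁻¹]/(ℤ₃[B] + ℤ₃·3·B⁻¹)`. -/
abbrev Q3 : Type _ :=
  LaurentPolynomial ℤ_[3] ⧸
    Submodule.span S3
      (Set.range (Polynomial.toLaurent : S3 → LaurentPolynomial ℤ_[3]) ∪
        {LaurentPolynomial.C (3 : ℤ_[3]) * LaurentPolynomial.T (-1)})

open Polynomial LaurentPolynomial

abbrev L3 : Type _ := LaurentPolynomial ℤ_[3]

lemma smul_L3 (r : S3) (l : L3) : r • l = toLaurent r * l := rfl
lemma prime_C3 : Prime (Polynomial.C (3 : ℤ_[3]) : S3) := by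
  rw [Polynomial.prime_C_iff]; simpa using PadicInt.prime_p (p := 3)

def psi : S3 × S3 →ₗ[S3] L3 where
  toFun x := toLaurent x.2 + LaurentPolynomial.C 3 * T (-1) * toLaurent x.1
  map_add' x y := by simp only [Prod.fst_add, Prod.snd_add, map_add]; ring
  map_smul' r x := by
    simp only [Prod.smul_fst, Prod.smul_snd, smul_eq_mul, map_mul, RingHom.id_apply, smul_L3]
    ring

@[simp] lemma psi_apply (x : S3 × S3) :
    psi x = toLaurent x.2 + LaurentPolynomial.C 3 * T (-1) * toLaurent x.1 := rfl

lemma hT11 : (T 1 : L3) * T (-1) = 1 := by rw [← T_add]; norm_num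

abbrev spanRel : Submodule S3 (S3 × S3) :=
  Submodule.span S3 {((Polynomial.X : S3), -(Polynomial.C (3 : ℤ_[3])))}

lemma spanRel_le_ker : spanRel ≤ LinearMap.ker psi := by
  rw [Submodule.span_le, Set.singleton_subset_iff]
  simp only [SetLike.mem_coe, LinearMap.mem_ker, psi_apply, map_neg, Polynomial.toLaurent_C,
    Polynomial.toLaurent_X]
  linear_combination (LaurentPolynomial.C (3:ℤ_[3])) * hT11

lemma ker_psi_le : LinearMap.ker psi ≤ spanRel := by
  rintro ⟨a, b⟩ h
  have h0 : toLaurent b + LaurentPolynomial.C 3 * T (-1) * toLaurent a = 0 := h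
  have h1 : X * b + Polynomial.C 3 * a = 0 := by
    apply toLaurent_injective
    simp only [map_add, map_mul, Polynomial.toLaurent_X, Polynomial.toLaurent_C, map_zero]
    linear_combination (T 1 : L3) * h0 - LaurentPolynomial.C (3:ℤ_[3]) * toLaurent a * hT11
  have hdvd : (Polynomial.C (3 : ℤ_[3]) : S3) ∣ X * b := ⟨-a, by linear_combination h1⟩
  rcases (prime_C3.2.2 _ _ hdvd) with hX | hb
  · exfalso
    have := (Polynomial.C_dvd_iff_dvd_coeff _ _).1 hX 1
    rw [Polynomial.coeff_X_one] at this
    exact (PadicInt.prime_p (p := 3)).not_unit (by simpa using isUnit_of_dvd_one this)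
  · obtain ⟨b', rfl⟩ := hb
    have h2 : X * b' + a = 0 := by
      rcases mul_eq_zero.1 (show (Polynomial.C (3:ℤ_[3]) : S3) * (X * b' + a) = 0 by
        linear_combination h1) with h | h
      · exact absurd h prime_C3.ne_zero
      · exact h
    refine Submodule.mem_span_singleton.2 ⟨-b', ?_⟩
    have : a = -(X * b') := by linear_combination h2
    ext <;> simp [this] <;> ring

def phi : P3 →ₗ[S3] L3 := Submodule.liftQ spanRel psi spanRel_le_ker

@[simp] lemma phi_mk (x : S3 × S3) : phi (Submodule.Quotient.mk x) = psi x := rfl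

lemma phi_inj : Function.Injective phi := by
  rw [← LinearMap.ker_eq_bot]
  exact Submodule.ker_liftQ_eq_bot _ _ _ ker_psi_le

abbrev Qspan : Submodule S3 L3 :=
  Submodule.span S3
    (Set.range (Polynomial.toLaurent : S3 → L3) ∪
      {LaurentPolynomial.C (3 : ℤ_[3]) * LaurentPolynomial.T (-1)})

lemma range_phi : LinearMap.range phi = Qspan := by
  rw [phi, Submodule.range_liftQ]
  apply le_antisymm
  · rintro _ ⟨⟨a, b⟩, rfl⟩
    apply Submodule.add_mem
    · exact Submodule.subset_span (Or.inl ⟨b, rfl⟩)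
    · have : (LaurentPolynomial.C (3:ℤ_[3]) * T (-1) * toLaurent a) =
          a • (LaurentPolynomial.C (3:ℤ_[3]) * T (-1)) := by rw [smul_L3]; ring
      rw [this]
      exact Submodule.smul_mem _ _ (Submodule.subset_span (Or.inr rfl))
  · rw [Submodule.span_le]
    rintro x (⟨a, rfl⟩ | rfl)
    · exact ⟨(0, a), by simp⟩
    · exact ⟨(1, 0), by simp⟩

abbrev M3 : Type _ := (Fin 4 → L3) × (Fin 2 → L3)

def projP : Fin 2 → (P3 × P3 →ₗ[S3] P3) := ![LinearMap.fst S3 P3 P3, LinearMap.snd S3 P3 P3]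

def F : N3 →ₗ[S3] M3 :=
  ((LinearMap.pi fun i : Fin 4 => (Algebra.linearMap S3 L3).comp (LinearMap.proj i)).prodMap
    (LinearMap.pi fun j : Fin 2 => phi.comp (projP j))).comp
    (LinearMap.snd S3 (Fin 8 → ZMod 3) ((Fin 4 → S3) × (P3 × P3)))

@[simp] lemma F_apply (x : N3) :
    F x = (fun i => toLaurent (x.2.1 i), fun j => phi (projP j x.2.2)) := rfl

lemma TmulT (n : ℤ) (l : L3) : T (-n) * (T n * l) = l := by
  rw [← mul_assoc, ← T_add]; simp

lemma smul_pow_M3 (n : ℕ) (y : M3) :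
    (X ^ n : S3) • y = (fun i => T n * y.1 i, fun j => T n * y.2 j) := by
  refine Prod.ext (funext fun i => ?_) (funext fun j => ?_) <;>
    simp [smul_L3, Polynomial.toLaurent_X_pow]

lemma exists_T_pow' (l : L3) (N n : ℕ) (hn : n ≤ N) (f : S3) (hf : toLaurent f = l * T n) :
    toLaurent (f * X ^ (N - n)) = l * T N := by
  rw [map_mul, Polynomial.toLaurent_X_pow, hf, mul_assoc, ← T_add]
  congr 2
  omega

lemma X_smul_zmod (z : ZMod 3) : (X : S3) • z = 0 := by
  show (PadicInt.toZMod ((Polynomial.evalRingHom (0:ℤ_[3])) X)) • z = 0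
  simp

instance isLocF : IsLocalizedModule (Submonoid.powers (X : S3)) F where
  map_units := by
    rintro ⟨s, n, rfl⟩
    rw [Module.End.isUnit_iff]
    constructor
    · intro x y h
      simp only [Module.algebraMap_end_apply, smul_pow_M3] at h
      have h1 := congrArg Prod.fst h
      have h2 := congrArg Prod.snd h
      refine Prod.ext (funext fun i => ?_) (funext fun j => ?_)
      · have := congrArg (fun u => T (-(n:ℤ)) * u i) h1
        simpa [TmulT] using this
      · have := congrArg (fun u => T (-(n:ℤ)) * u j) h2
        simpa [TmulT] using this
    · intro y
      refine ⟨(fun i => T (-(n:ℤ)) * y.1 i, fun j => T (-(n:ℤ)) * y.2 j), ?_⟩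
      simp only [Module.algebraMap_end_apply, smul_pow_M3]
      refine Prod.ext (funext fun i => ?_) (funext fun j => ?_) <;>
        · simpa using TmulT (-(n:ℤ)) _
  surj := by
    intro y
    choose n₁ g₁ hg₁ using fun i : Fin 4 => exists_T_pow (y.1 i)
    choose n₂ g₂ hg₂ using fun j : Fin 2 => exists_T_pow (y.2 j)
    obtain ⟨N, hN₁, hN₂⟩ : ∃ N, (∀ i, n₁ i ≤ N) ∧ ∀ j, n₂ j ≤ N :=
      ⟨Finset.univ.sup n₁ ⊔ Finset.univ.sup n₂,
        fun i => le_trans (Finset.le_sup (Finset.mem_univ i)) le_sup_left,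
        fun j => le_trans (Finset.le_sup (Finset.mem_univ j)) le_sup_right⟩
    refine ⟨⟨(0, fun i => g₁ i * X ^ (N - n₁ i),
        (Submodule.Quotient.mk (0, g₂ 0 * X ^ (N - n₂ 0)),
         Submodule.Quotient.mk (0, g₂ 1 * X ^ (N - n₂ 1)))), ⟨X ^ N, N, rfl⟩⟩, ?_⟩
    have key₁ : ∀ i, toLaurent (g₁ i * X ^ (N - n₁ i)) = y.1 i * T N :=
      fun i => exists_T_pow' _ _ _ (hN₁ i) _ (hg₁ i)
    have key₂ : ∀ j, toLaurent (g₂ j * X ^ (N - n₂ j)) = y.2 j * T N :=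
      fun j => exists_T_pow' _ _ _ (hN₂ j) _ (hg₂ j)
    show (X ^ N : S3) • y = F _
    rw [smul_pow_M3, F_apply]
    refine Prod.ext (funext fun i => ?_) (funext fun j => ?_)
    · dsimp only
      rw [key₁ i, mul_comm]
    · dsimp only
      fin_cases j <;>
      · simp only [projP, Matrix.cons_val_zero, Matrix.cons_val_one, Matrix.head_cons,
          LinearMap.fst_apply, LinearMap.snd_apply, phi_mk, psi_apply, map_zero, mul_zero,
          add_zero, Fin.zero_eta, Fin.mk_one]
        rw [mul_comm]
        first
        | exact (key₂ 0).symm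
        | exact (key₂ 1).symm
  exists_of_eq := by
    intro x y h
    refine ⟨⟨X, 1, pow_one X⟩, ?_⟩
    rw [F_apply, F_apply, Prod.ext_iff] at h
    obtain ⟨h1, h2⟩ := h
    have hg : x.2.1 = y.2.1 := funext fun i => toLaurent_injective (congrFun h1 i)
    have hp1 : x.2.2.1 = y.2.2.1 := phi_inj (by simpa [projP] using congrFun h2 0)
    have hp2 : x.2.2.2 = y.2.2.2 := phi_inj (by simpa [projP] using congrFun h2 1)
    show (X : S3) • x = (X : S3) • y
    refine Prod.ext (funext fun i => ?_) ?_
    · show (X : S3) • x.1 i = (X : S3) • y.1 i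
      rw [X_smul_zmod, X_smul_zmod]
    · show (X : S3) • x.2 = (X : S3) • y.2
      have : x.2 = y.2 := Prod.ext hg (Prod.ext hp1 hp2)
      rw [this]

lemma range_F : LinearMap.range F =
    (Submodule.pi Set.univ fun _ : Fin 4 =>
        LinearMap.range (Algebra.linearMap S3 L3)).prod
      (Submodule.pi Set.univ fun _ : Fin 2 => Qspan) := by
  apply le_antisymm
  · rintro _ ⟨x, rfl⟩
    rw [F_apply]
    refine Submodule.mem_prod.2 ⟨?_, ?_⟩
    · intro i _
      exact ⟨x.2.1 i, rfl⟩
    · intro j _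
      rw [← range_phi]
      exact LinearMap.mem_range_self _ _
  · rintro ⟨u, v⟩ h
    obtain ⟨hu, hv⟩ := Submodule.mem_prod.1 h
    have hu' : ∀ i, ∃ a : S3, toLaurent a = u i := fun i => by
      obtain ⟨a, ha⟩ := hu i (Set.mem_univ i); exact ⟨a, ha⟩
    have hv' : ∀ j, ∃ q : P3, phi q = v j := fun j => by
      have : v j ∈ LinearMap.range phi := range_phi ▸ hv j (Set.mem_univ j)
      exact this
    choose a ha using hu'
    choose q hq using hv'
    refine ⟨(0, a, (q 0, q 1)), ?_⟩
    rw [F_apply]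
    refine Prod.ext (funext fun i => ?_) (funext fun j => ?_)
    · exact ha i
    · dsimp only
      fin_cases j <;>
        simp only [projP, Matrix.cons_val_zero, Matrix.cons_val_one, Matrix.head_cons,
          LinearMap.fst_apply, LinearMap.snd_apply, Fin.zero_eta, Fin.mk_one] <;>
        first
        | exact hq 0
        | exact hq 1

def quotProd {M N : Type*} [AddCommGroup M] [AddCommGroup N] [Module S3 M] [Module S3 N]
    (A : Submodule S3 M) (B : Submodule S3 N) :
    ((M × N) ⧸ A.prod B) ≃ₗ[S3] (M ⧸ A) × (N ⧸ B) := by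
  have hker : LinearMap.ker ((A.mkQ.comp (LinearMap.fst S3 M N)).prod
      (B.mkQ.comp (LinearMap.snd S3 M N))) = A.prod B := by
    ext ⟨m, n⟩
    simp [LinearMap.mem_ker, Prod.ext_iff, Submodule.Quotient.mk_eq_zero, Submodule.mem_prod,
      LinearMap.prod_apply, Prod.mk_eq_zero]
  have hsurj : Function.Surjective ((A.mkQ.comp (LinearMap.fst S3 M N)).prod
      (B.mkQ.comp (LinearMap.snd S3 M N))) := by
    rintro ⟨mq, nq⟩
    obtain ⟨m, rfl⟩ := A.mkQ_surjective mq
    obtain ⟨n, rfl⟩ := B.mkQ_surjective nq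
    exact ⟨(m, n), rfl⟩
  exact (Submodule.quotEquivOfEq _ _ hker.symm).trans
    (LinearMap.quotKerEquivOfSurjective _ hsurj)


lemma P3_torsion_free (n : ℕ) (q : P3) (hq : ((X : S3) ^ n) • q = 0) : q = 0 := by
  apply phi_inj
  rw [map_zero]
  have h1 : (X ^ n : S3) • phi q = 0 := by rw [← map_smul, hq, map_zero]
  rw [smul_L3, Polynomial.toLaurent_X_pow] at h1
  have := congrArg (T (-(n:ℤ)) * ·) h1
  simpa [TmulT] using this

theorem part1 : gammaB = (⊤ : Submodule S3 (Fin 8 → ZMod 3)).prod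
    (((⊥ : Submodule S3 (Fin 4 → S3))).prod (⊥ : Submodule S3 (P3 × P3))) := by
  apply le_antisymm
  · rw [gammaB]
    apply iSup_le
    intro n x hx
    rw [Submodule.mem_torsionBy_iff] at hx
    refine Submodule.mem_prod.2 ⟨Submodule.mem_top, Submodule.mem_prod.2 ⟨?_, ?_⟩⟩
    · rw [Submodule.mem_bot]
      funext i
      have h1 : (X ^ n : S3) • x.2.1 i = 0 := by
        have := congrFun (congrArg (fun y : N3 => y.2.1) hx) i
        simpa using this
      simpa [smul_eq_mul, Polynomial.X_ne_zero] using h1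
    · rw [Submodule.mem_bot]
      have h1 : (X ^ n : S3) • x.2.2 = 0 := congrArg (fun y : N3 => y.2.2) hx
      refine Prod.ext (P3_torsion_free n _ ?_) (P3_torsion_free n _ ?_)
      · exact congrArg Prod.fst h1
      · exact congrArg Prod.snd h1
  · intro x hx
    obtain ⟨-, hg, hp⟩ : x.1 ∈ ⊤ ∧ x.2.1 ∈ ⊥ ∧ x.2.2 ∈ ⊥ := by
      obtain ⟨h1, h2⟩ := Submodule.mem_prod.1 hx
      exact ⟨h1, Submodule.mem_prod.1 h2⟩
    rw [Submodule.mem_bot] at hg hp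
    apply Submodule.mem_iSup_of_mem 1
    rw [Submodule.mem_torsionBy_iff, pow_one]
    refine Prod.ext (funext fun i => ?_) ?_
    · show (X : S3) • x.1 i = 0
      exact X_smul_zmod _
    · show (X : S3) • x.2 = 0
      rw [show x.2 = 0 from Prod.ext hg hp, smul_zero]

abbrev eIso : LocalizedModule (Submonoid.powers (Polynomial.X : S3)) N3 ≃ₗ[S3] M3 :=
  IsLocalizedModule.iso (Submonoid.powers (Polynomial.X : S3)) F

def cokEquiv : N3Cok ≃ₗ[S3] (Fin 4 → LPQ3) × (Fin 2 → Q3) := by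
  have h1 : (eIso : LocalizedModule (Submonoid.powers (X : S3)) N3 →ₗ[S3] M3).comp locMapN
      = F := by
    have h2 := IsLocalizedModule.iso_symm_comp (Submonoid.powers (X : S3)) F
    apply LinearMap.ext
    intro x
    have h3 := DFunLike.congr_fun h2 x
    simp only [LinearMap.comp_apply, LinearEquiv.coe_coe] at h3 ⊢
    rw [← h3]
    exact (IsLocalizedModule.iso (Submonoid.powers (Polynomial.X : S3)) F).apply_symm_apply _
  have hmap : (LinearMap.range locMapN).map (eIso : LocalizedModule _ N3 →ₗ[S3] M3) = LinearMap.range F := by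
    have : (LinearMap.range locMapN).map (eIso : LocalizedModule _ N3 →ₗ[S3] M3) =
        (LinearMap.range locMapN).map (eIso : LocalizedModule _ N3 →ₗ[S3] M3) := rfl
    rw [this, ← LinearMap.range_comp, h1]
  exact (Submodule.Quotient.equiv _ _ eIso hmap).trans <|
    (Submodule.quotEquivOfEq _ _ range_F).trans <|
    (quotProd _ _).trans <|
    LinearEquiv.prodCongr (Submodule.quotientPi _) (Submodule.quotientPi _)

/-- For the basic block `N = T ⊕ ℤ₃[B]⁴ ⊕ P₁ ⊕ P₂` at `p = 3`: the `B`-power torsion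
submodule of `N` equals `T`, and the cokernel of `N → N_B` is isomorphic as a
`ℤ₃[B]`-module to `(ℤ₃[B,B⁻¹]/ℤ₃[B])⁴ ⊕ Q²` with `Q = ℤ₃[B,B⁻¹]/(ℤ₃[B] + ℤ₃·3·B⁻¹)`. -/
theorem N3_torsion_and_cok :
    gammaB = (⊤ : Submodule S3 (Fin 8 → ZMod 3)).prod
        (((⊥ : Submodule S3 (Fin 4 → S3))).prod (⊥ : Submodule S3 (P3 × P3))) ∧
    Nonempty (N3Cok ≃ₗ[S3] (Fin 4 → LPQ3) × (Fin 2 → Q3)) := by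
  exact ⟨part1, ⟨cokEquiv⟩⟩

end
end
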